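/- Let γ_1, …, γ_m ∈ ℝ^{m−n}, c ∈ ℝ^{m−n}, and Z = {z ∈ ℂ^m : Σ_k |z_k|² γ_k = c}. Let L be the additive subgroup of ℝ^{m−n} generated by γ_1, …, γ_m. Suppose that for every z ∈ Z, the additive subgroup generated by {γ_k : z_k ≠ 0} equals L. Then the torus T_Γ = {(e^{2πi⟨γ_1,φ⟩}, …, e^{2πi⟨γ_m,φ⟩}) : φ ∈ ℝ^{m−n}} acts freely on Z: for every z ∈ Z and φ ∈ ℝ^{m−n}, if e^{2πi⟨γ_k,φ⟩} z_k = z_k for all k, then e^{2πi⟨γ_k,φ⟩} = 1 for all k. -/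
import Mathlib

/-- The exponential condition `exp(2πi t) = 1` is equivalent to `t ∈ ℤ`. -/
lemma exp_two_pi_int (t : ℝ) :
    Complex.exp ((2 * Real.pi * t : ℝ) * Complex.I) = 1 ↔ ∃ N : ℤ, t = N := by
  rw [Complex.exp_eq_one_iff]
  constructor
  · rintro ⟨N, hN⟩
    refine ⟨N, ?_⟩
    have h1 : ((2 * Real.pi * t : ℝ) : ℂ) * Complex.I
        = (((N : ℝ) * (2 * Real.pi) : ℝ) : ℂ) * Complex.I := by
      push_cast at hN ⊢
      linear_combination hN
    have h2 : (2 * Real.pi * t : ℝ) = ((N : ℝ) * (2 * Real.pi) : ℝ) := by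
      exact_mod_cast mul_right_cancel₀ Complex.I_ne_zero h1
    have hpi : (2 * Real.pi : ℝ) ≠ 0 := by positivity
    have h3 : (2 * Real.pi) * t = (2 * Real.pi) * (N : ℝ) := by linear_combination h2
    exact mul_left_cancel₀ hpi h3
  · rintro ⟨N, hN⟩
    exact ⟨N, by rw [hN]; push_cast; ring⟩

/-- If for every `z` in the moment-angle set `Z = {z : ∑ₖ |z_k|² γ_k = c}` the additive subgroup
generated by `{γ_k : z_k ≠ 0}` equals the additive subgroup `L` generated by all of
`γ₁,…,γₘ`, then the torus `T_Γ = {(e^{2πi⟨γ₁,φ⟩},…,e^{2πi⟨γₘ,φ⟩})}` acts freely on `Z`. -/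
theorem stmt_8 (m n : ℕ) (γ : Fin m → Fin (m - n) → ℝ) (c : Fin (m - n) → ℝ)
    (hL : ∀ z : Fin m → ℂ, (∑ k, Complex.normSq (z k) • γ k) = c →
      AddSubgroup.closure (γ '' {k | z k ≠ 0}) = AddSubgroup.closure (Set.range γ)) :
    ∀ z : Fin m → ℂ, (∑ k, Complex.normSq (z k) • γ k) = c →
      ∀ φ : Fin (m - n) → ℝ,
        (∀ k, Complex.exp (((2 * Real.pi * ∑ j, γ k j * φ j : ℝ) : ℂ) * Complex.I) * z k
            = z k) →
        ∀ k, Complex.exp (((2 * Real.pi * ∑ j, γ k j * φ j : ℝ) : ℂ) * Complex.I) = 1 := by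
  intro z hz φ hfix k
  -- the pairing with φ as an additive hom
  let f : (Fin (m - n) → ℝ) →+ ℝ :=
    { toFun := fun v => ∑ j, v j * φ j
      map_zero' := by simp
      map_add' := by intro a b; simp [add_mul, Finset.sum_add_distrib] }
  -- the subgroup of vectors pairing to an integer
  let H : AddSubgroup (Fin (m - n) → ℝ) :=
    (AddSubgroup.zmultiples (1 : ℝ)).comap f
  have hmem : ∀ v ∈ AddSubgroup.closure (γ '' {k | z k ≠ 0}), v ∈ H := by
    intro v hv
    refine AddSubgroup.closure_le H |>.mpr ?_ hv
    rintro w ⟨i, hi, rfl⟩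
    have h1 := (exp_two_pi_int (∑ j, γ i j * φ j)).mp ?_
    · obtain ⟨N, hN⟩ := h1
      exact ⟨N, by simpa [f] using hN.symm⟩
    · have := hfix i
      have hzi : z i ≠ 0 := hi
      exact mul_right_cancel₀ hzi (by simpa using this.trans (one_mul (z i)).symm)
  have hk : γ k ∈ AddSubgroup.closure (γ '' {k | z k ≠ 0}) := by
    rw [hL z hz]
    exact AddSubgroup.subset_closure ⟨k, rfl⟩
  obtain ⟨N, hN⟩ := hmem _ hk
  rw [exp_two_pi_int]
  exact ⟨N, by simpa [f] using hN.symm⟩
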